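/- (Theorem 1 of the paper, for undirected graphs.) Let G be a simple graph on a finite vertex set V with a symmetric edge sign function σ with values in {+1, −1}. Then every cycle of G is positive if and only if for every pair of vertices u, v, all paths from u to v have the same sign (the product of edge signs along the path). -/

import Mathlib

/-- The sign of a walk in a signed graph: the product of the edge signs along it. -/
def walkSign {V : Type*} {G : SimpleGraph V} (σ : V → V → ℤ) {u v : V}
    (w : G.Walk u v) : ℤ :=
  (w.darts.map fun d => σ d.fst d.snd).prod

section aux

open SimpleGraph Walk

variable {V : Type*} {G : SimpleGraph V} {σ : V → V → ℤ}

lemma walkSign_nil {u : V} : walkSign σ (Walk.nil : G.Walk u u) = 1 := rfl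

lemma walkSign_cons {u v w : V} (h : G.Adj u v) (p : G.Walk v w) :
    walkSign σ (Walk.cons h p) = σ u v * walkSign σ p := by
  simp [walkSign]

lemma walkSign_append {u v w : V} (p : G.Walk u v) (q : G.Walk v w) :
    walkSign σ (p.append q) = walkSign σ p * walkSign σ q := by
  simp [walkSign, darts_append]

lemma walkSign_reverse (hsymm : ∀ u v, G.Adj u v → σ u v = σ v u)
    {u v : V} (p : G.Walk u v) : walkSign σ p.reverse = walkSign σ p := by
  have hfun : ((fun d : G.Dart => σ d.fst d.snd) ∘ SimpleGraph.Dart.symm)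
      = fun d : G.Dart => σ d.fst d.snd :=
    funext fun d => hsymm _ _ d.symm.adj
  rw [walkSign, darts_reverse, List.map_reverse, List.prod_reverse, List.map_map, hfun]
  rfl

lemma walkSign_eq_one_or (hsign : ∀ u v, G.Adj u v → σ u v = 1 ∨ σ u v = -1)
    {u v : V} (p : G.Walk u v) : walkSign σ p = 1 ∨ walkSign σ p = -1 := by
  induction p with
  | nil => left; rfl
  | cons h p ih =>
    rw [walkSign_cons]
    rcases hsign _ _ h with h1 | h1 <;> rcases ih with h2 | h2 <;> simp [h1, h2]

lemma closed_walk_sign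
    (hsymm : ∀ u v, G.Adj u v → σ u v = σ v u)
    (hsign : ∀ u v, G.Adj u v → σ u v = 1 ∨ σ u v = -1)
    (hcyc : ∀ (u : V) (w : G.Walk u u), w.IsCycle → walkSign σ w = 1) :
    ∀ (n : ℕ) (u : V) (w : G.Walk u u), w.length ≤ n → walkSign σ w = 1 := by
  classical
  intro n
  induction n using Nat.strong_induction_on with
  | _ n ih =>
    intro u w hlen
    cases w with
    | nil => rfl
    | @cons _ v _ h p =>
      by_cases hp : p.IsPath
      · by_cases he : s(u, v) ∈ p.edges
        · -- the walk is u - v - u along a single edge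
          have hnn : ¬ p.Nil := by
            intro hn
            rw [nil_iff_length_eq] at hn
            have h1 : p.edges = [] := List.length_eq_zero_iff.mp (by rw [length_edges, hn])
            rw [h1] at he
            simp at he
          obtain ⟨y, h2, p₂, rfl⟩ := not_nil_iff.mp hnn
          have hvny : v ∉ p₂.support := by
            have := hp.support_nodup
            rw [support_cons] at this
            exact (List.nodup_cons.mp this).1
          have he' : (u = v ∧ v = y ∨ u = y) ∨ s(u, v) ∈ p₂.edges := by
            simpa [edges_cons] using he
          rcases he' with (⟨h3, _⟩ | h3) | hmem
          · exact absurd h3 h.ne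
          · subst h3
            have : p₂ = Walk.nil := (isPath_iff_eq_nil (p := p₂)).mp hp.of_cons
            subst this
            rw [walkSign_cons, walkSign_cons, walkSign_nil, ← hsymm u v h]
            rcases hsign u v h with h1 | h1 <;> rw [h1] <;> ring
          · exfalso
            have : s(v, u) ∈ p₂.edges := by rwa [Sym2.eq_swap] at hmem
            exact hvny (fst_mem_support_of_mem_edges p₂ this)
        · exact hcyc u (Walk.cons h p) ((cons_isCycle_iff p h).mpr ⟨hp, he⟩)
      · -- p has a repeated vertex x
        have hnd : ¬ p.support.Nodup := fun hnd => hp (IsPath.mk' hnd)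
        obtain ⟨x, hdup⟩ := List.exists_duplicate_iff_not_nodup.mpr hnd
        have hx2 : 2 ≤ p.support.count x := List.duplicate_iff_two_le_count.mp hdup
        have hx : x ∈ p.support := hdup.mem
        set p₁ := p.takeUntil x hx with hp₁
        set rest := p.dropUntil x hx with hrest
        have hspec : p₁.append rest = p := take_spec p hx
        have hcount1 : p₁.support.count x = 1 := count_support_takeUntil_eq_one p hx
        have hxtail : x ∈ rest.support.tail := by
          have hsupp : p.support = p₁.support ++ rest.support.tail := by
            rw [← hspec, support_append]
          rw [hsupp, List.count_append, hcount1] at hx2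
          have : 1 ≤ rest.support.tail.count x := by omega
          exact List.count_pos_iff.mp (by omega)
        have hnnr : ¬ rest.Nil := by
          intro hn
          rw [nil_iff_length_eq] at hn
          have h1 : rest.support.length = 1 := by rw [length_support, hn]
          obtain ⟨a, ha⟩ := List.length_eq_one_iff.mp h1
          rw [ha] at hxtail
          simp at hxtail
        obtain ⟨y, h3, r, hr⟩ := not_nil_iff.mp hnnr
        have hxr : x ∈ r.support := by
          rw [hr, support_cons, List.tail_cons] at hxtail
          exact hxtail
        set rt := r.takeUntil x hxr with hrt
        set p₃ := r.dropUntil x hxr with hp₃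
        have hspec2 : rt.append p₃ = r := take_spec r hxr
        -- length bookkeeping
        have hlen1 : p.length = p₁.length + (1 + (rt.length + p₃.length)) := by
          rw [← hspec, length_append, hr, length_cons, ← hspec2, length_append]
          omega
        have hlenw : (Walk.cons h p).length = p.length + 1 := length_cons h p
        -- the two shorter closed walks
        have hc : walkSign σ (Walk.cons h (p₁.append p₃)) = 1 := by
          apply ih (n - 1) (by omega) u
          rw [length_cons, length_append]
          omega
        have hc2 : walkSign σ (Walk.cons h3 rt : G.Walk x x) = 1 := by
          apply ih (n - 1) (by omega) x
          rw [length_cons]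
          omega
        rw [walkSign_cons, walkSign_append] at hc
        rw [walkSign_cons] at hc2
        have e1 : walkSign σ (Walk.cons h p)
            = σ u v * (walkSign σ p₁ * (σ x y * (walkSign σ rt * walkSign σ p₃))) := by
          rw [walkSign_cons, ← hspec, walkSign_append, hr, walkSign_cons, ← hspec2,
            walkSign_append]
        rw [e1]
        calc σ u v * (walkSign σ p₁ * (σ x y * (walkSign σ rt * walkSign σ p₃)))
            = (σ u v * (walkSign σ p₁ * walkSign σ p₃)) * (σ x y * walkSign σ rt) := by ring
          _ = 1 := by rw [hc, hc2, mul_one]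

end aux

/-- Every cycle of a signed graph is positive iff for every pair of vertices all paths
joining them have the same sign. -/
theorem strong_structure_paths {V : Type*} [Fintype V]
    (G : SimpleGraph V) (σ : V → V → ℤ)
    (hsymm : ∀ u v, G.Adj u v → σ u v = σ v u)
    (hsign : ∀ u v, G.Adj u v → σ u v = 1 ∨ σ u v = -1) :
    (∀ (u : V) (w : G.Walk u u), w.IsCycle → walkSign σ w = 1) ↔
      ∀ (u v : V) (p q : G.Walk u v), p.IsPath → q.IsPath →
        walkSign σ p = walkSign σ q := by
  constructor
  · intro hcyc u v p q hp hq
    have key := closed_walk_sign hsymm hsign hcyc (p.append q.reverse).length u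
      (p.append q.reverse) le_rfl
    rw [walkSign_append, walkSign_reverse hsymm] at key
    rcases walkSign_eq_one_or hsign q with h1 | h1 <;>
      rcases walkSign_eq_one_or hsign p with h2 | h2 <;>
      rw [h1, h2] at key ⊢ <;> simp_all
  · intro hpath u w hw
    cases w with
    | nil => exact absurd hw SimpleGraph.Walk.IsCycle.not_of_nil
    | @cons _ v _ h p =>
      obtain ⟨hp, he⟩ := (SimpleGraph.Walk.cons_isCycle_iff p h).mp hw
      have h1 : walkSign σ (SimpleGraph.Walk.cons h (SimpleGraph.Walk.nil : G.Walk v v))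
          = walkSign σ p.reverse := hpath u v _ _ (by simp [h.ne]) hp.reverse
      rw [walkSign_cons, walkSign_nil, walkSign_reverse hsymm] at h1
      rw [walkSign_cons, ← h1, mul_one]
      rcases hsign u v h with h2 | h2 <;> rw [h2] <;> ring
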